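/- For each i ∈ {1,…,n}, the function φ₁ⁱ(x) := xᵢ/(1−|x|²) satisfies Δ_H φ₁ⁱ − n φ₁ⁱ = 0 at every point of the open unit ball B₁ ⊂ ℝⁿ, and for every 0 < R < 1 it satisfies the Steklov boundary condition ∂_{ν_H} φ₁ⁱ = ((1+R²)/(2R)) φ₁ⁱ at every point of the sphere ∂B_R; i.e., φ₁ⁱ is an eigenfunction with boundary eigenvalue μ₁ = (1+R²)/(2R). -/

import Mathlib

noncomputable section

open Real

/-- Partial derivative `∂ᵢ` of a function on `ℝⁿ`. -/
def pd {n : ℕ} (i : Fin n) (f : (Fin n → ℝ) → ℝ) (x : Fin n → ℝ) : ℝ :=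
  fderiv ℝ f x (Pi.single i 1)

/-- Euclidean Laplacian on `ℝⁿ`. -/
def lapF {n : ℕ} (f : (Fin n → ℝ) → ℝ) (x : Fin n → ℝ) : ℝ :=
  ∑ i, pd i (pd i f) x

/-- Squared Euclidean norm `|x|²`. -/
def nsq {n : ℕ} (x : Fin n → ℝ) : ℝ := ∑ i, (x i) ^ 2

/-- The Laplace–Beltrami operator of the Poincaré metric
`g_H = 4|dx|²/(1-|x|²)²` on the unit ball:
`Δ_H v = ((1-|x|²)²/4) Δv + ((n-2)(1-|x|²)/2) x·∇v`. -/
def hypLap (n : ℕ) (v : (Fin n → ℝ) → ℝ) (x : Fin n → ℝ) : ℝ :=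
  ((1 - nsq x) ^ 2 / 4) * lapF v x +
    (((n : ℝ) - 2) * (1 - nsq x) / 2) * ∑ i, x i * pd i v x

/-- The outward hyperbolic normal derivative on the sphere `∂B_R`:
`∂_{ν_H} v = ((1-|x|²)/2) (x/R)·∇v`. -/
def hypNormalDeriv (n : ℕ) (R : ℝ) (v : (Fin n → ℝ) → ℝ) (x : Fin n → ℝ) : ℝ :=
  ((1 - nsq x) / 2) * ∑ i, (x i / R) * pd i v x

namespace Stmt11

variable {n : ℕ}

/-- The Fréchet derivative of `nsq`. -/
def Nmap (x : Fin n → ℝ) : (Fin n → ℝ) →L[ℝ] ℝ :=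
  ∑ j, (2 * x j) • ContinuousLinearMap.proj j

lemma Nmap_apply (x : Fin n → ℝ) (j : Fin n) : Nmap x (Pi.single j 1) = 2 * x j := by
  simp [Nmap, ContinuousLinearMap.sum_apply, Pi.single_apply, mul_ite,
    Finset.sum_ite_eq]

lemma hasFDerivAt_proj (x : Fin n → ℝ) (j : Fin n) :
    HasFDerivAt (fun y : Fin n → ℝ => y j)
      (ContinuousLinearMap.proj (R := ℝ) (φ := fun _ : Fin n => ℝ) j) x :=
  (ContinuousLinearMap.proj (R := ℝ) (φ := fun _ : Fin n => ℝ) j).hasFDerivAt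

lemma hasFDerivAt_nsq (x : Fin n → ℝ) :
    HasFDerivAt (nsq : (Fin n → ℝ) → ℝ) (Nmap x) x := by
  have h : ∀ j ∈ Finset.univ, HasFDerivAt (fun y : Fin n → ℝ => y j ^ 2)
      ((2 * x j) • ContinuousLinearMap.proj (R := ℝ) (φ := fun _ : Fin n => ℝ) j) x := by
    intro j _
    have h1 := (hasFDerivAt_proj x j).fun_mul (hasFDerivAt_proj x j)
    have h2 : HasFDerivAt (fun y : Fin n → ℝ => y j ^ 2)
        (x j • ContinuousLinearMap.proj (R := ℝ) (φ := fun _ : Fin n => ℝ) j +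
          x j • ContinuousLinearMap.proj (R := ℝ) (φ := fun _ : Fin n => ℝ) j) x := by
      simpa [sq] using h1
    convert h2 using 1
    ext z
    simp
    ring
  have := HasFDerivAt.fun_sum h
  exact this

lemma hasFDerivAt_v (x : Fin n → ℝ) :
    HasFDerivAt (fun y : Fin n → ℝ => 1 - nsq y) (-Nmap x) x :=
  (hasFDerivAt_nsq x).const_sub 1

lemma hasFDerivAt_vinv (x : Fin n → ℝ) (hv : 1 - nsq x ≠ 0) :
    HasFDerivAt (fun y : Fin n → ℝ => (1 - nsq y)⁻¹)
      ((-((1 - nsq x) ^ 2)⁻¹) • (-Nmap x)) x :=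
  (hasDerivAt_inv hv).comp_hasFDerivAt x (hasFDerivAt_v x)

lemma pd_eq {x : Fin n → ℝ} {f : (Fin n → ℝ) → ℝ} {D : (Fin n → ℝ) →L[ℝ] ℝ}
    (h : HasFDerivAt f D x) (j : Fin n) : pd j f x = D (Pi.single j 1) := by
  rw [pd, h.fderiv]

variable {i : Fin n}

lemma hasFDerivAt_phi (x : Fin n → ℝ) (hv : 1 - nsq x ≠ 0) :
    HasFDerivAt (fun y : Fin n → ℝ => y i / (1 - nsq y))
      ((x i) • ((-((1 - nsq x) ^ 2)⁻¹) • (-Nmap x)) +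
        ((1 - nsq x)⁻¹) • ContinuousLinearMap.proj i) x := by
  have h := (hasFDerivAt_proj x i).fun_mul (hasFDerivAt_vinv x hv)
  simpa [div_eq_mul_inv] using h

lemma pd_phi (x : Fin n → ℝ) (hv : 1 - nsq x ≠ 0) (j : Fin n) :
    pd j (fun y : Fin n → ℝ => y i / (1 - nsq y)) x =
      (if i = j then 1 else 0) * (1 - nsq x)⁻¹ +
        x i * (2 * x j) * ((1 - nsq x) ^ 2)⁻¹ := by
  rw [pd_eq (hasFDerivAt_phi x hv) j]
  simp [Nmap_apply, Pi.single_apply, eq_comm]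
  try ring

/-- explicit formula for the first partial derivative -/
def g (i j : Fin n) : (Fin n → ℝ) → ℝ := fun y =>
  (if i = j then 1 else 0) * (1 - nsq y)⁻¹ + y i * (2 * y j) * ((1 - nsq y) ^ 2)⁻¹

lemma hasFDerivAt_g (x : Fin n → ℝ) (hv : 1 - nsq x ≠ 0) (j : Fin n) :
    HasFDerivAt (g i j)
      (((if i = j then (1:ℝ) else 0) • ((-((1 - nsq x) ^ 2)⁻¹) • (-Nmap x))) +
        ((x i * (2 * x j)) •
          ((-(((1 - nsq x) ^ 2) ^ 2)⁻¹) •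
            ((1 - nsq x) • (-Nmap x) + (1 - nsq x) • (-Nmap x))) +
          ((1 - nsq x) ^ 2)⁻¹ •
            ((x i • ((2:ℝ) • ContinuousLinearMap.proj j)) +
              (2 * x j) • ContinuousLinearMap.proj i))) x := by
  have hsq : HasFDerivAt (fun y : Fin n → ℝ => (1 - nsq y) ^ 2)
      ((1 - nsq x) • (-Nmap x) + (1 - nsq x) • (-Nmap x)) x := by
    have := (hasFDerivAt_v x).fun_mul (hasFDerivAt_v x)
    simpa [sq] using this
  have hsqinv : HasFDerivAt (fun y : Fin n → ℝ => ((1 - nsq y) ^ 2)⁻¹)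
      ((-(((1 - nsq x) ^ 2) ^ 2)⁻¹) •
        ((1 - nsq x) • (-Nmap x) + (1 - nsq x) • (-Nmap x))) x :=
    (hasDerivAt_inv (pow_ne_zero 2 hv)).comp_hasFDerivAt x hsq
  have ha : HasFDerivAt (fun y : Fin n → ℝ => y i * (2 * y j))
      (x i • ((2:ℝ) • ContinuousLinearMap.proj j) +
        (2 * x j) • ContinuousLinearMap.proj i) x :=
    (hasFDerivAt_proj x i).mul ((hasFDerivAt_proj x j).const_mul 2)
  have h2 := ha.fun_mul hsqinv
  have h1 := (hasFDerivAt_vinv x hv).const_mul (if i = j then (1:ℝ) else 0)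
  have := h1.fun_add h2
  exact this
  try
    ext z
    simp [ContinuousLinearMap.add_apply, ContinuousLinearMap.smul_apply]
    try ring

lemma pd_pd_phi (x : Fin n → ℝ) (hv : 1 - nsq x ≠ 0) (j : Fin n) :
    pd j (pd j (fun y : Fin n → ℝ => y i / (1 - nsq y))) x =
      2 * x i * ((1 - nsq x) ^ 2)⁻¹ +
        (if i = j then 1 else 0) * (4 * x j) * ((1 - nsq x) ^ 2)⁻¹ +
        8 * x i * x j ^ 2 * ((1 - nsq x) ^ 3)⁻¹ := by
  have hU : IsOpen {y : Fin n → ℝ | 1 - nsq y ≠ 0} := by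
    have hc : Continuous (fun y : Fin n → ℝ => 1 - nsq y) := by
      unfold nsq; fun_prop
    exact isOpen_ne.preimage hc
  have hev : (pd j (fun y : Fin n → ℝ => y i / (1 - nsq y))) =ᶠ[nhds x] g i j := by
    filter_upwards [hU.mem_nhds hv] with y hy
    rw [pd_phi y hy j]; rfl
  have key : fderiv ℝ (pd j (fun y : Fin n → ℝ => y i / (1 - nsq y))) x =
      fderiv ℝ (g i j) x := Filter.EventuallyEq.fderiv_eq hev
  have : pd j (pd j (fun y : Fin n → ℝ => y i / (1 - nsq y))) x = pd j (g i j) x := by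
    show fderiv ℝ (pd j (fun y : Fin n → ℝ => y i / (1 - nsq y))) x (Pi.single j 1) =
      fderiv ℝ (g i j) x (Pi.single j 1)
    rw [key]
  rw [this, pd_eq (hasFDerivAt_g x hv j) j]
  simp only [ContinuousLinearMap.add_apply, ContinuousLinearMap.smul_apply,
    ContinuousLinearMap.neg_apply, Nmap_apply, ContinuousLinearMap.proj_apply,
    Pi.single_apply, smul_eq_mul]
  rcases eq_or_ne i j with h | h
  · subst h
    simp only [if_pos rfl, eq_self_iff_true, if_true]
    field_simp
    ring
  · simp only [if_neg h, if_neg (Ne.symm h), eq_self_iff_true, if_true]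
    field_simp
    ring

end Stmt11

/-- for each `i`, `φ₁ⁱ(x) = xᵢ/(1-|x|²)` satisfies
`Δ_H φ₁ⁱ - n φ₁ⁱ = 0` in the unit ball and the Steklov condition
`∂_{ν_H} φ₁ⁱ = ((1+R²)/(2R)) φ₁ⁱ` on every sphere `∂B_R`, `0 < R < 1`. -/
theorem stmt_11 (n : ℕ) (hn : 2 ≤ n) (i : Fin n)
    (φ₁ : (Fin n → ℝ) → ℝ) (hφ₁ : φ₁ = fun x => x i / (1 - nsq x)) :
    (∀ x : Fin n → ℝ, nsq x < 1 → hypLap n φ₁ x - (n : ℝ) * φ₁ x = 0) ∧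
    (∀ R : ℝ, 0 < R → R < 1 → ∀ x : Fin n → ℝ, nsq x = R ^ 2 →
      hypNormalDeriv n R φ₁ x = ((1 + R ^ 2) / (2 * R)) * φ₁ x) := by
  subst hφ₁
  have grad_sum : ∀ (x : Fin n → ℝ), 1 - nsq x ≠ 0 →
      (∑ j, x j * pd j (fun y : Fin n → ℝ => y i / (1 - nsq y)) x) =
        x i * (1 - nsq x)⁻¹ + 2 * x i * nsq x * ((1 - nsq x) ^ 2)⁻¹ := by
    intro x hv
    have : ∀ j : Fin n, x j * pd j (fun y : Fin n → ℝ => y i / (1 - nsq y)) x =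
        (if i = j then 1 else 0) * x j * (1 - nsq x)⁻¹ +
          2 * x i * x j ^ 2 * ((1 - nsq x) ^ 2)⁻¹ := by
      intro j
      rw [Stmt11.pd_phi x hv j]
      ring
    rw [Finset.sum_congr rfl fun j _ => this j, Finset.sum_add_distrib]
    have h1 : (∑ j, (if i = j then (1:ℝ) else 0) * x j * (1 - nsq x)⁻¹) =
        x i * (1 - nsq x)⁻¹ := by
      simp [ite_mul, Finset.sum_ite_eq]
    have h2 : (∑ j, 2 * x i * x j ^ 2 * ((1 - nsq x) ^ 2)⁻¹) =
        2 * x i * nsq x * ((1 - nsq x) ^ 2)⁻¹ := by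
      rw [← Finset.sum_mul, ← Finset.mul_sum]
      rw [show (∑ j, x j ^ 2) = nsq x from rfl]
    rw [h1, h2]
  constructor
  · intro x hx
    have hv : 1 - nsq x ≠ 0 := by
      have : nsq x ≠ 1 := ne_of_lt hx
      intro h; apply this; linarith
    have hlap : lapF (fun y : Fin n → ℝ => y i / (1 - nsq y)) x =
        2 * (n : ℝ) * x i * ((1 - nsq x) ^ 2)⁻¹ + 4 * x i * ((1 - nsq x) ^ 2)⁻¹ +
          8 * x i * nsq x * ((1 - nsq x) ^ 3)⁻¹ := by
      unfold lapF
      rw [Finset.sum_congr rfl fun j _ => Stmt11.pd_pd_phi x hv j]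
      rw [Finset.sum_add_distrib, Finset.sum_add_distrib]
      congr 1
      · congr 1
        · rw [Finset.sum_const, Finset.card_univ, Fintype.card_fin]
          push_cast
          try ring
        · rw [show (∑ j : Fin n, (if i = j then (1:ℝ) else 0) * (4 * x j) *
              ((1 - nsq x) ^ 2)⁻¹) =
              ∑ j : Fin n, (if i = j then (4 * x j * ((1 - nsq x) ^ 2)⁻¹) else 0) from
            Finset.sum_congr rfl fun j _ => by split <;> simp]
          simp [Finset.sum_ite_eq]
          try ring
      · rw [show (∑ j : Fin n, 8 * x i * x j ^ 2 * ((1 - nsq x) ^ 3)⁻¹) =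
            (8 * x i) * (∑ j, x j ^ 2) * ((1 - nsq x) ^ 3)⁻¹ by
          rw [Finset.mul_sum, Finset.sum_mul]
          try exact Finset.sum_congr rfl fun j _ => by ring]
        rw [show (∑ j, x j ^ 2) = nsq x from rfl]
    unfold hypLap
    beta_reduce
    rw [hlap, grad_sum x hv]
    set s := nsq x with hs
    field_simp
    ring
  · intro R hR0 hR1 x hxR
    have hv : 1 - nsq x ≠ 0 := by
      rw [hxR]
      nlinarith
    unfold hypNormalDeriv
    have : (∑ j, (x j / R) * pd j (fun y : Fin n → ℝ => y i / (1 - nsq y)) x) =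
        (∑ j, x j * pd j (fun y : Fin n → ℝ => y i / (1 - nsq y)) x) / R := by
      rw [Finset.sum_div]
      exact Finset.sum_congr rfl fun j _ => by ring
    rw [this, grad_sum x hv]
    have hRne : R ≠ 0 := ne_of_gt hR0
    have hv' : 1 - R ^ 2 ≠ 0 := by rw [hxR] at hv; exact hv
    simp only [hxR]
    field_simp
    ring
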